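/- Let t ≥ 1 be a real number and G a t-tough graph on n vertices, and let C be a non-Hamiltonian cycle of G. If x ∈ V(G) - V(C) has more than n/(t+1) neighbors on C, then G has a cycle C' with vertex set V(C) ∪ {x}. -/

import Mathlib

open SimpleGraph

variable {V : Type*}

/-- The disjoint union `P2 ∪ P3`: edge 0-1, path 2-3-4, on `Fin 5`. -/
def P2P3 : SimpleGraph (Fin 5) := SimpleGraph.fromRel (fun a b =>
  (a = 0 ∧ b = 1) ∨ (a = 2 ∧ b = 3) ∨ (a = 3 ∧ b = 4))

/-- `G` has no induced subgraph isomorphic to `P2 ∪ P3`. -/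
def P2P3Free (G : SimpleGraph V) : Prop :=
  ¬ ∃ f : Fin 5 ↪ V, ∀ a b, P2P3.Adj a b ↔ G.Adj (f a) (f b)

/-- The number of connected components of `G - S`. -/
noncomputable def numComponents [Fintype V] (G : SimpleGraph V) (S : Finset V) : ℕ :=
  Nat.card ((G.induce ((↑S : Set V)ᶜ)).ConnectedComponent)

/-- `G` is `t`-tough: `|S| ≥ t·c(G-S)` whenever `c(G-S) ≥ 2`. -/
def IsTough [Fintype V] (t : ℝ) (G : SimpleGraph V) : Prop :=
  ∀ S : Finset V, 2 ≤ numComponents G S → t * numComponents G S ≤ S.card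

namespace StmtAux

open SimpleGraph.Walk

variable {G : SimpleGraph V} {v : V}

lemma tail_ne_nil {C : G.Walk v v} (hC : C.IsCycle) : C.support.tail ≠ [] := by
  have h3 := hC.three_le_length
  have hl : C.support.tail.length = C.length := by
    have := C.length_support
    have := List.length_tail (l := C.support)
    omega
  intro h
  rw [h] at hl
  simp at hl
  omega

lemma getLast_tail_eq {C : G.Walk v v} (hC : C.IsCycle) :
    C.support.tail.getLast (tail_ne_nil hC) = v := by
  rw [List.getLast_tail]
  exact C.getLast_support

/-- In a cycle, membership in the tail of the support is the same as in the support. -/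
lemma mem_tail_iff {C : G.Walk v v} (hC : C.IsCycle) (z : V) :
    z ∈ C.support.tail ↔ z ∈ C.support := by
  constructor
  · intro h
    rw [C.support_eq_cons]
    exact List.mem_cons_of_mem _ h
  · intro h
    rw [C.support_eq_cons] at h
    rcases List.mem_cons.mp h with h | h
    · subst h
      have := List.getLast_mem (tail_ne_nil hC)
      rwa [getLast_tail_eq hC] at this
    · exact h

lemma support_dropLast_nodup {C : G.Walk v v} (hC : C.IsCycle) :
    C.support.dropLast.Nodup := by
  have hsplit : C.support.tail.dropLast ++ [v] = C.support.tail := by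
    conv_rhs => rw [← List.dropLast_append_getLast (tail_ne_nil hC)]
    rw [getLast_tail_eq hC]
  have hnd : (C.support.tail.dropLast ++ [v]).Nodup := by
    rw [hsplit]; exact hC.support_nodup
  have hdl : C.support.dropLast = v :: C.support.tail.dropLast := by
    conv_lhs => rw [C.support_eq_cons, ← hsplit]
    rw [← List.cons_append, List.dropLast_concat]
  rw [hdl]
  rw [List.nodup_append] at hnd
  exact List.nodup_cons.mpr ⟨fun hv => hnd.2.2 v hv v (List.mem_singleton_self v) rfl, hnd.1⟩

lemma darts_fst_eq {C : G.Walk v v} (hC : C.IsCycle) {d₁ d₂ : G.Dart}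
    (h₁ : d₁ ∈ C.darts) (h₂ : d₂ ∈ C.darts) (h : d₁.fst = d₂.fst) : d₁ = d₂ := by
  have hnd : (C.darts.map (·.fst)).Nodup := by
    rw [Walk.map_fst_darts]; exact support_dropLast_nodup hC
  exact List.inj_on_of_nodup_map hnd h₁ h₂ h

lemma darts_snd_eq {C : G.Walk v v} (hC : C.IsCycle) {d₁ d₂ : G.Dart}
    (h₁ : d₁ ∈ C.darts) (h₂ : d₂ ∈ C.darts) (h : d₁.snd = d₂.snd) : d₁ = d₂ := by
  have hnd : (C.darts.map (·.snd)).Nodup := by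
    rw [Walk.map_snd_darts]; exact hC.support_nodup
  exact List.inj_on_of_nodup_map hnd h₁ h₂ h

lemma exists_first_dart {a b : V} (p : G.Walk a b) (hp : ¬ p.Nil) :
    ∃ d ∈ p.darts, d.fst = a ∧ d.snd = p.getVert 1 := by
  cases p with
  | nil => simp at hp
  | cons h q =>
    refine ⟨⟨(_, _), h⟩, List.mem_cons_self, rfl, ?_⟩
    simp [Walk.getVert_cons_succ, Walk.getVert_zero]

variable [DecidableEq V]

/-- The successor of a vertex on a closed walk. -/
def csucc (C : G.Walk v v) (u : V) : V :=
  if h : u ∈ C.support then (C.rotate u h).getVert 1 else u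

lemma csucc_eq {C : G.Walk v v} {u : V} (h : u ∈ C.support) :
    csucc C u = (C.rotate u h).getVert 1 := dif_pos h

lemma csucc_dart_mem {C : G.Walk v v} (hC : C.IsCycle) {u : V} (hu : u ∈ C.support) :
    ∃ d ∈ C.darts, d.fst = u ∧ d.snd = csucc C u := by
  have hR : (C.rotate u hu).IsCycle := hC.rotate hu
  obtain ⟨d, hd, hfst, hsnd⟩ := exists_first_dart (C.rotate u hu) hR.not_nil
  refine ⟨d, ?_, hfst, ?_⟩
  · exact (C.rotate_darts u hu).mem_iff.mp hd
  · rw [hsnd, csucc_eq hu]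

lemma csucc_eq_of_dart {C : G.Walk v v} (hC : C.IsCycle) {u : V} (hu : u ∈ C.support)
    {d : G.Dart} (hd : d ∈ C.darts) (hfst : d.fst = u) : d.snd = csucc C u := by
  obtain ⟨d', hd', hfst', hsnd'⟩ := csucc_dart_mem hC hu
  rw [darts_fst_eq hC hd hd' (by rw [hfst, hfst'])]
  exact hsnd'

lemma csucc_adj {C : G.Walk v v} (hC : C.IsCycle) {u : V} (hu : u ∈ C.support) :
    G.Adj u (csucc C u) := by
  obtain ⟨d, hd, hfst, hsnd⟩ := csucc_dart_mem hC hu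
  have := d.adj
  rw [hfst, hsnd] at this
  exact this

lemma csucc_mem {C : G.Walk v v} (hC : C.IsCycle) {u : V} (hu : u ∈ C.support) :
    csucc C u ∈ C.support := by
  obtain ⟨d, hd, hfst, hsnd⟩ := csucc_dart_mem hC hu
  rw [← hsnd]
  exact C.dart_snd_mem_support_of_mem_darts hd

lemma csucc_inj {C : G.Walk v v} (hC : C.IsCycle) {u w : V} (hu : u ∈ C.support)
    (hw : w ∈ C.support) (h : csucc C u = csucc C w) : u = w := by
  obtain ⟨d, hd, hfst, hsnd⟩ := csucc_dart_mem hC hu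
  obtain ⟨e, he, hfst', hsnd'⟩ := csucc_dart_mem hC hw
  have : d = e := darts_snd_eq hC hd he (by rw [hsnd, hsnd', h])
  rw [← hfst, ← hfst', this]

/-- Closing a path `a ⋯ b` through an external vertex `x` into a cycle. -/
lemma aux_close {a b x : V} (P : G.Walk a b) (hP : P.IsPath)
    (hx : x ∉ P.support) (hxa : G.Adj x a) (hbx : G.Adj b x) (hab : a ≠ b) :
    ∃ C' : G.Walk x x, C'.IsCycle ∧ ∀ z, z ∈ C'.support ↔ z = x ∨ z ∈ P.support := by
  refine ⟨Walk.cons hxa (P.concat hbx), ?_, ?_⟩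
  · rw [Walk.cons_isCycle_iff]
    constructor
    · apply Walk.IsPath.mk'
      rw [Walk.support_concat]
      simp only [List.concat_eq_append, List.nodup_append, List.nodup_cons]
      refine ⟨hP.support_nodup, by simp, ?_⟩
      intro z hz
      simp only [List.mem_singleton]
      rintro _ rfl rfl
      exact hx hz
    · intro hmem
      rw [Walk.edges_concat] at hmem
      rw [List.concat_eq_append, List.mem_append] at hmem
      rcases hmem with h | h
      · exact hx (P.fst_mem_support_of_mem_edges h)
      · rw [List.mem_singleton, Sym2.eq_iff] at h
        rcases h with ⟨h1, h2⟩ | ⟨h1, h2⟩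
        · exact hx (h1 ▸ P.end_mem_support)
        · exact hab h2
  · intro z
    rw [Walk.support_cons, List.mem_cons, Walk.support_concat]
    simp only [List.concat_eq_append, List.mem_append, List.mem_singleton]
    tauto

/-- Rerouting a cycle through a chord between the successors of `u` and `w`. -/
lemma reroute {C : G.Walk v v} (hC : C.IsCycle) {u w : V} (hu : u ∈ C.support)
    (hw : w ∈ C.support) (huw : u ≠ w) (hadj : G.Adj (csucc C u) (csucc C w)) :
    ∃ P : G.Walk w u, P.IsPath ∧ ∀ z, z ∈ P.support ↔ z ∈ C.support := by
  have hR : (C.rotate u hu).IsCycle := hC.rotate hu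
  have hn := hR.not_nil
  have hsu : (C.rotate u hu).getVert 1 = csucc C u := (csucc_eq hu).symm
  set P0 : G.Walk (csucc C u) u := ((C.rotate u hu).tail).copy hsu rfl with hP0def
  have hP0supp : P0.support = (C.rotate u hu).support.tail := by
    rw [hP0def, Walk.support_copy, Walk.support_tail_of_not_nil _ hn]
  have hP0mem : ∀ z, z ∈ P0.support ↔ z ∈ C.support := fun z => by
    rw [hP0supp, (C.support_rotate u hu).mem_iff, mem_tail_iff hC]
  have hP0path : P0.IsPath := Walk.IsPath.mk' (by rw [hP0supp]; exact hR.support_nodup)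
  have hdartsP0 : ∀ d ∈ P0.darts, d ∈ C.darts := by
    intro d hd
    rw [hP0def, Walk.darts_copy] at hd
    have h2 : d ∈ (C.rotate u hu).darts := by
      rw [← Walk.cons_tail_eq (C.rotate u hu) hn, Walk.darts_cons]
      exact List.mem_cons_of_mem _ hd
    exact (C.rotate_darts u hu).mem_iff.mp h2
  have hwP0 : w ∈ P0.support := (hP0mem w).mpr hw
  set P1 := P0.takeUntil w hwP0 with hP1def
  set P2 := P0.dropUntil w hwP0 with hP2def
  have hspec : P1.append P2 = P0 := P0.take_spec hwP0
  have hsuppsplit : P0.support = P1.support ++ P2.support.tail := by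
    rw [← hspec, Walk.support_append]
  have hP2nil : ¬ P2.Nil := Walk.not_nil_of_ne huw.symm
  have hsw : P2.getVert 1 = csucc C w := by
    obtain ⟨d, hd, hfst, hsnd⟩ := exists_first_dart P2 hP2nil
    rw [← hsnd]
    exact csucc_eq_of_dart hC hw (hdartsP0 d (P0.darts_dropUntil_subset hwP0 hd)) hfst
  set Q : G.Walk (csucc C w) u := (P2.tail).copy hsw rfl with hQdef
  have hQsupp : Q.support = P2.support.tail := by
    rw [hQdef, Walk.support_copy, Walk.support_tail_of_not_nil _ hP2nil]
  refine ⟨P1.reverse.append (Walk.cons hadj Q), ?_, ?_⟩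
  · apply Walk.IsPath.mk'
    rw [Walk.support_append, Walk.support_reverse, Walk.support_cons, List.tail_cons]
    have hnd : (P1.support ++ P2.support.tail).Nodup := by
      rw [← hsuppsplit]; exact hP0path.support_nodup
    rw [List.nodup_append] at hnd ⊢
    refine ⟨List.nodup_reverse.mpr hnd.1, by rw [hQsupp]; exact hnd.2.1, ?_⟩
    intro a ha b hb
    exact hnd.2.2 a (List.mem_reverse.mp ha) b (by rwa [hQsupp] at hb)
  · intro z
    rw [← hP0mem z, Walk.mem_support_append_iff, Walk.support_reverse, List.mem_reverse,
      Walk.support_cons, List.mem_cons, hsuppsplit, List.mem_append, hQsupp]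
    constructor
    · rintro (h | h | h)
      · exact Or.inl h
      · exact Or.inl (by rw [h]; exact P1.start_mem_support)
      · exact Or.inr h
    · rintro (h | h)
      · exact Or.inl h
      · exact Or.inr (Or.inr h)

end StmtAux

open StmtAux SimpleGraph.Walk in
theorem stmt8 [Fintype V] (t : ℝ) (ht : 1 ≤ t) (G : SimpleGraph V)
    (htough : IsTough t G) (v : V) (C : G.Walk v v) (hC : C.IsCycle)
    (hnonham : ∃ w, w ∉ C.support)
    (x : V) (hx : x ∉ C.support)
    (hdeg : (Fintype.card V : ℝ) / (t + 1) <
      ({u | u ∈ C.support ∧ G.Adj x u}.ncard : ℝ)) :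
    ∃ (w : V) (C' : G.Walk w w), C'.IsCycle ∧
      {u | u ∈ C'.support} = {u | u ∈ C.support} ∪ {x} := by
  classical
  -- abbreviations
  set A : Set V := {u | u ∈ C.support ∧ G.Adj x u} with hA
  -- A common post-processing step: a cycle through x with support `C.support ∪ {x}`.
  have finish : ∀ C' : G.Walk x x, C'.IsCycle →
      (∀ z, z ∈ C'.support ↔ z = x ∨ z ∈ C.support) →
      ∃ (w : V) (C' : G.Walk w w), C'.IsCycle ∧
        {u | u ∈ C'.support} = {u | u ∈ C.support} ∪ {x} := by
    intro C' h1 h2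
    refine ⟨x, C', h1, ?_⟩
    ext z
    simp only [Set.mem_setOf_eq, Set.mem_union, Set.mem_singleton_iff, h2 z]
    tauto
  -- Case 1: two consecutive neighbours of x on C.
  by_cases hcase1 : ∃ u ∈ A, G.Adj x (csucc C u)
  · obtain ⟨u, ⟨hu, hxu⟩, hxsu⟩ := hcase1
    have hR : (C.rotate u hu).IsCycle := hC.rotate hu
    have hn := hR.not_nil
    have hsu : (C.rotate u hu).getVert 1 = csucc C u := (csucc_eq hu).symm
    set P : G.Walk (csucc C u) u := ((C.rotate u hu).tail).copy hsu rfl with hPdef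
    have hPsupp : P.support = (C.rotate u hu).support.tail := by
      rw [hPdef, Walk.support_copy, Walk.support_tail_of_not_nil _ hn]
    have hPsuppmem : ∀ z, z ∈ P.support ↔ z ∈ C.support := by
      intro z
      rw [hPsupp, (C.support_rotate u hu).mem_iff, mem_tail_iff hC]
    have hPpath : P.IsPath := by
      apply Walk.IsPath.mk'
      rw [hPsupp]
      exact hR.support_nodup
    obtain ⟨C', h1, h2⟩ := aux_close P hPpath
      (fun hmem => hx ((hPsuppmem x).mp hmem)) hxsu hxu.symm
      (fun h => (csucc_adj hC hu).ne' h)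
    refine finish C' h1 (fun z => ?_)
    rw [h2 z]
    simp [hPsuppmem z]
  -- Case 2: a chord between successors of two neighbours of x on C.
  by_cases hcase2 : ∃ u ∈ A, ∃ w ∈ A, u ≠ w ∧ G.Adj (csucc C u) (csucc C w)
  · obtain ⟨u, ⟨hu, hxu⟩, w, ⟨hw, hxw⟩, huw, hadj⟩ := hcase2
    obtain ⟨P, hPpath, hPmem⟩ := reroute hC hu hw huw hadj
    obtain ⟨C', h1, h2⟩ := aux_close P hPpath (fun hmem => hx ((hPmem x).mp hmem))
      hxw hxu.symm huw.symm
    refine finish C' h1 (fun z => ?_)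
    rw [h2 z]
    simp [hPmem z]
  -- Case 3: contradiction via toughness.
  · exfalso
    have htpos : (0:ℝ) < t + 1 := by linarith
    set AF := (Set.toFinite A).toFinset with hAFdef
    have hAF : ∀ u : V, u ∈ AF ↔ u ∈ C.support ∧ G.Adj x u := fun u =>
      (Set.toFinite A).mem_toFinset
    have hncard : A.ncard = AF.card := Set.ncard_eq_toFinset_card A (Set.toFinite A)
    set TF := AF.image (csucc C) with hTFdef
    have hTF : ∀ z ∈ TF, ∃ u, (u ∈ C.support ∧ G.Adj x u) ∧ csucc C u = z := by
      intro z hz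
      obtain ⟨u, hu, rfl⟩ := Finset.mem_image.mp hz
      exact ⟨u, (hAF u).mp hu, rfl⟩
    have hcardTF : TF.card = AF.card := Finset.card_image_of_injOn (fun a ha b hb hab =>
      csucc_inj hC ((hAF a).mp ha).1 ((hAF b).mp hb).1 hab)
    have hxTF : x ∉ TF := by
      intro hxTF
      obtain ⟨u, hu, hequ⟩ := hTF x hxTF
      exact hx (hequ ▸ csucc_mem hC hu.1)
    set I := insert x TF with hIdef
    have hcardI : I.card = AF.card + 1 := by
      rw [hIdef, Finset.card_insert_of_notMem hxTF, hcardTF]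
    have hIadj : ∀ a ∈ I, ∀ b ∈ I, ¬ G.Adj a b := by
      intro a ha b hb hab
      rw [hIdef, Finset.mem_insert] at ha hb
      rcases ha with rfl | ha
      · rcases hb with rfl | hb
        · exact hab.ne rfl
        · obtain ⟨u, hu, rfl⟩ := hTF b hb
          exact hcase1 ⟨u, hu, hab⟩
      · rcases hb with rfl | hb
        · obtain ⟨u, hu, rfl⟩ := hTF a ha
          exact hcase1 ⟨u, hu, hab.symm⟩
        · obtain ⟨u, hu, rfl⟩ := hTF a ha
          obtain ⟨w', hw', rfl⟩ := hTF b hb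
          rcases eq_or_ne u w' with rfl | hne
          · exact hab.ne rfl
          · exact hcase2 ⟨u, hu, w', hw', hne, hab⟩
    set S := Iᶜ with hSdef
    have hset : ((↑S : Set V)ᶜ) = (↑I : Set V) := by
      rw [hSdef, Finset.coe_compl, compl_compl]
    have hbot : G.induce (↑I : Set V) = ⊥ := by
      ext a b
      simp only [comap_adj, Function.Embedding.coe_subtype, bot_adj, iff_false]
      exact hIadj a.1 (Finset.mem_coe.mp a.2) b.1 (Finset.mem_coe.mp b.2)
    have hcomp : numComponents G S = I.card := by
      show Nat.card ((G.induce ((↑S : Set V)ᶜ)).ConnectedComponent) = I.card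
      rw [hset, hbot]
      have e : (⊥ : SimpleGraph (↑I : Set V)).ConnectedComponent ≃ (↑I : Set V) := by
        refine Equiv.symm (Equiv.ofBijective
          (fun a => SimpleGraph.connectedComponentMk _ a) ⟨?_, ?_⟩)
        · intro a b hab
          exact SimpleGraph.reachable_bot.mp (SimpleGraph.ConnectedComponent.eq.mp hab)
        · exact fun c => Quot.exists_rep c
      rw [Nat.card_congr e, Nat.card_coe_set_eq, Set.ncard_coe_finset]
    have hd1 : 1 ≤ AF.card := by
      have h0 : (0:ℝ) ≤ (Fintype.card V : ℝ) / (t+1) := div_nonneg (by positivity) htpos.le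
      have h1 := lt_of_le_of_lt h0 hdeg
      rw [hncard] at h1
      have : 0 < AF.card := by exact_mod_cast h1
      omega
    have hts := htough S (by rw [hcomp, hcardI]; omega)
    have hIle : I.card ≤ Fintype.card V := Finset.card_le_univ I
    have hcast : (S.card : ℝ) = (Fintype.card V : ℝ) - (I.card : ℝ) := by
      rw [hSdef, Finset.card_compl, Nat.cast_sub hIle]
    rw [hcomp, hcast] at hts
    have hIcast : (I.card : ℝ) = (AF.card : ℝ) + 1 := by rw [hcardI]; push_cast; ring
    rw [hIcast] at hts
    have hle : ((AF.card : ℝ) + 1) ≤ (Fintype.card V : ℝ) / (t+1) := by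
      rw [le_div_iff₀ htpos]
      nlinarith
    rw [hncard] at hdeg
    linarith
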